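/- Let β_t be a CPM and ρ^z_t its induced risk measure for z_d < z < z_u. Then ρ^z_t is continuous from below: X_n ↑ X in L^{bb}_T implies ρ^z_t(X_n) ↓ ρ^z_t(X). -/

import Mathlib

open MeasureTheory Filter Set Topology

noncomputable section

variable {Ω : Type*}

/-- The lattice of `m`-measurable random variables bounded from below
(possibly `+∞`-valued). -/
def Lbb (m : MeasurableSpace Ω) : Set (Ω → EReal) :=
  {X | Measurable[m] X ∧ ∃ c : ℝ, ∀ ω, (c : EReal) ≤ X ω}

/-- `ρ` is the `P`-essential infimum of the family `S` of (`m`-measurable)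
random variables. -/
def IsEssInfFam {F : MeasurableSpace Ω} (m : MeasurableSpace Ω) (P : @Measure Ω F)
    (S : Set (Ω → EReal)) (ρ : Ω → EReal) : Prop :=
  Measurable[m] ρ ∧ (∀ ξ ∈ S, ∀ᵐ ω ∂P, ρ ω ≤ ξ ω) ∧
    ∀ η : Ω → EReal, Measurable[m] η → (∀ ξ ∈ S, ∀ᵐ ω ∂P, η ω ≤ ξ ω) →
      ∀ᵐ ω ∂P, η ω ≤ ρ ω

/-- `g` is, on the set `C`, the `P`-essential supremum of the family `S`. -/
def IsEssSupFamOn {F : MeasurableSpace Ω} (m : MeasurableSpace Ω) (P : @Measure Ω F)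
    (S : Set (Ω → EReal)) (g : Ω → EReal) (C : Set Ω) : Prop :=
  (∀ φ ∈ S, ∀ᵐ ω ∂P, ω ∈ C → φ ω ≤ g ω) ∧
    ∀ η : Ω → EReal, Measurable[m] η → (∀ φ ∈ S, ∀ᵐ ω ∂P, ω ∈ C → φ ω ≤ η ω) →
      ∀ᵐ ω ∂P, ω ∈ C → g ω ≤ η ω

/-- A conditional performance measure (CPM) `β` conditional to the sub-σ-algebra `m`,
defined on `F`-measurable variables bounded from below, with non-random essential
bounds `zd < zu`. -/
structure IsCPM (F m : MeasurableSpace Ω) (P : @Measure Ω F)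
    (β : (Ω → EReal) → Ω → EReal) (zd zu : EReal) : Prop where
  maps : ∀ X ∈ Lbb F, β X ∈ Lbb m
  quasiConcave : ∀ X ∈ Lbb F, ∀ Y ∈ Lbb F, ∀ c : ℝ, 0 ≤ c → c ≤ 1 →
    ∀ᵐ ω ∂P, min (β X ω) (β Y ω) ≤
      β (fun ω' => (c : EReal) * X ω' + ((1 - c : ℝ) : EReal) * Y ω') ω
  lt_bounds : zd < zu
  le_zu : ∀ X ∈ Lbb F, ∀ᵐ ω ∂P, β X ω ≤ zu
  zu_least : ∀ η : Ω → EReal, Measurable[m] η →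
    (∀ X ∈ Lbb F, ∀ᵐ ω ∂P, β X ω ≤ η ω) → ∀ᵐ ω ∂P, zu ≤ η ω
  zd_le : ∀ X ∈ Lbb F, ∀ᵐ ω ∂P, zd ≤ β X ω
  zd_greatest : ∀ η : Ω → EReal, Measurable[m] η →
    (∀ X ∈ Lbb F, ∀ᵐ ω ∂P, η ω ≤ β X ω) → ∀ᵐ ω ∂P, η ω ≤ zd
  mono : ∀ X Y : Ω → EReal, (∀ ω, Y ω ≤ X ω) → ∀ᵐ ω ∂P, β Y ω ≤ β X ω
  strictShift : ∀ X ∈ Lbb F, ∀ c : ℝ, 0 < c →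
    ∀ᵐ ω ∂P, β X ω < zu → zd < β (fun ω' => X ω' + (c : EReal)) ω →
      β X ω < β (fun ω' => X ω' + (c : EReal)) ω
  contBelow : ∀ (Xs : ℕ → Ω → EReal) (X : Ω → EReal), (∀ n, Xs n ∈ Lbb F) → X ∈ Lbb F →
    (∀ ω, Monotone fun n => Xs n ω) → (∀ ω, X ω = ⨆ n, Xs n ω) →
    ∀ᵐ ω ∂P, β X ω = ⨆ n, β (Xs n) ω
  loc : ∀ X ∈ Lbb F, ∀ B : Set Ω, MeasurableSet[m] B →
    ∀ᵐ ω ∂P, ω ∈ B → β X ω = β (B.indicator X) ω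
  levelBdd : ∀ z : ℝ, zd < (z : EReal) → (z : EReal) < zu →
    ∃ x : ℝ, ∀ ξ ∈ Lbb m, (∀ᵐ ω ∂P, (z : EReal) ≤ β ξ ω) → ∀ᵐ ω ∂P, (x : EReal) ≤ ξ ω

/-- Scale invariance of a conditional performance measure. -/
def ScaleInvariant (F : MeasurableSpace Ω) (P : @Measure Ω F)
    (β : (Ω → EReal) → Ω → EReal) : Prop :=
  ∀ X ∈ Lbb F, ∀ c : ℝ, 0 < c → ∀ᵐ ω ∂P, β (fun ω' => (c : EReal) * X ω') ω = β X ω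

/-- The set `M^z_t(X) = {ξ ∈ L^{bb}_t : β_t(X + ξ) ≥ z}`. -/
def Mset (F m : MeasurableSpace Ω) (P : @Measure Ω F)
    (β : (Ω → EReal) → Ω → EReal) (z : ℝ) (X : Ω → EReal) : Set (Ω → EReal) :=
  {ξ | ξ ∈ Lbb m ∧ ∀ᵐ ω ∂P, (z : EReal) ≤ β (fun ω' => X ω' + ξ ω') ω}

/-- The family of simple `m`-measurable variables `φ = Σ z_i 1_{B_i}` with
`zd < φ < zu` and `ρ^{z_i} < 0` on `B_i ∩ C`. -/
def SimpleFam {F : MeasurableSpace Ω} (m : MeasurableSpace Ω) (P : @Measure Ω F)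
    (ρ : ℝ → Ω → EReal) (zd zu : EReal) (C : Set Ω) : Set (Ω → EReal) :=
  {φ | ∃ (n : ℕ) (zs : Fin n → ℝ) (Bs : Fin n → Set Ω),
    (∀ i, MeasurableSet[m] (Bs i)) ∧ Pairwise (Function.onFun Disjoint Bs) ∧
    (⋃ i, Bs i) = Set.univ ∧
    (∀ i, zd < (zs i : EReal) ∧ (zs i : EReal) < zu) ∧
    (∀ i, ∀ ω ∈ Bs i, φ ω = (zs i : EReal)) ∧
    (∀ i, ∀ᵐ ω ∂P, ω ∈ Bs i ∩ C → ρ (zs i) ω < 0)}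

/-- A standard family of conditional convex risk measures `(σ^z)_{z ∈ (zd, zu)}`. -/
structure IsStdFamily (F m : MeasurableSpace Ω) (P : @Measure Ω F)
    (σ : ℝ → (Ω → EReal) → Ω → EReal) (zd zu : EReal) : Prop where
  lt_bounds : zd < zu
  maps : ∀ z : ℝ, zd < (z : EReal) → (z : EReal) < zu → ∀ X ∈ Lbb F,
    Measurable[m] (σ z X) ∧ ∃ C : ℝ, ∀ ω, σ z X ω ≤ (C : EReal)
  boundedOnBounded : ∀ z : ℝ, zd < (z : EReal) → (z : EReal) < zu → ∀ X ∈ Lbb F,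
    (∃ C : ℝ, ∀ ω, X ω ≤ (C : EReal)) → ∃ c : ℝ, ∀ ω, (c : EReal) ≤ σ z X ω
  convex : ∀ z : ℝ, zd < (z : EReal) → (z : EReal) < zu →
    ∀ X ∈ Lbb F, ∀ Y ∈ Lbb F, ∀ c : ℝ, 0 ≤ c → c ≤ 1 →
    ∀ᵐ ω ∂P, σ z (fun ω' => (c : EReal) * X ω' + ((1 - c : ℝ) : EReal) * Y ω') ω ≤
      (c : EReal) * σ z X ω + ((1 - c : ℝ) : EReal) * σ z Y ω
  anti : ∀ z : ℝ, zd < (z : EReal) → (z : EReal) < zu → ∀ X Y : Ω → EReal,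
    (∀ ω, Y ω ≤ X ω) → ∀ᵐ ω ∂P, σ z X ω ≤ σ z Y ω
  transInv : ∀ z : ℝ, zd < (z : EReal) → (z : EReal) < zu → ∀ X ∈ Lbb F, ∀ ξ ∈ Lbb m,
    ∀ᵐ ω ∂P, σ z (fun ω' => X ω' + ξ ω') ω = σ z X ω - ξ ω
  loc : ∀ z : ℝ, zd < (z : EReal) → (z : EReal) < zu → ∀ X ∈ Lbb F,
    ∀ B : Set Ω, MeasurableSet[m] B →
    ∀ᵐ ω ∂P, ω ∈ B → σ z X ω = σ z (B.indicator X) ω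
  contBelow : ∀ z : ℝ, zd < (z : EReal) → (z : EReal) < zu →
    ∀ (Xs : ℕ → Ω → EReal) (X : Ω → EReal), (∀ n, Xs n ∈ Lbb F) → X ∈ Lbb F →
    (∀ ω, Monotone fun n => Xs n ω) → (∀ ω, X ω = ⨆ n, Xs n ω) →
    ∀ᵐ ω ∂P, σ z X ω = ⨅ n, σ z (Xs n) ω
  paths : ∀ X ∈ Lbb F, ∀ᵐ ω ∂P,
    MonotoneOn (fun z : ℝ => σ z X ω) {z : ℝ | zd < (z : EReal) ∧ (z : EReal) < zu} ∧
    ContinuousOn (fun z : ℝ => σ z X ω) {z : ℝ | zd < (z : EReal) ∧ (z : EReal) < zu}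
  botLim : zd = ⊥ →
    Tendsto (fun z : ℝ => essSup (σ z (fun _ => 0)) P) atBot (𝓝 (⊥ : EReal))

/-- The set `B_X = ∩_{z ∈ (zd,zu)} {σ^z(X) ≥ 0}`. -/
def BXset (σ : ℝ → (Ω → EReal) → Ω → EReal) (zd zu : EReal) (X : Ω → EReal) : Set Ω :=
  {ω | ∀ z : ℝ, zd < (z : EReal) → (z : EReal) < zu → 0 ≤ σ z X ω}

/-- `g` is the value at `X` of the performance measure generated by the standard
family `σ`:  `g = zd 1_{B_X} + 1_{B_X^c} esssup{φ simple : σ^{z_i}(X) < 0 on B_i ∩ B_X^c}`. -/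
def GeneratedBy (F m : MeasurableSpace Ω) (P : @Measure Ω F)
    (σ : ℝ → (Ω → EReal) → Ω → EReal) (zd zu : EReal)
    (X : Ω → EReal) (g : Ω → EReal) : Prop :=
  (∀ᵐ ω ∂P, ω ∈ BXset σ zd zu X → g ω = zd) ∧
  IsEssSupFamOn m P (SimpleFam m P (fun z => σ z X) zd zu ((BXset σ zd zu X)ᶜ)) g
    ((BXset σ zd zu X)ᶜ)


lemma ereal_measurable_add {α : Type*} [MeasurableSpace α] {f g : α → EReal}
    (hf : Measurable f) (hg : Measurable g) : Measurable (fun ω => f ω + g ω) := by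
  have : (fun ω => f ω + g ω) = fun ω =>
      if f ω = ⊥ ∨ g ω = ⊥ then ⊥
      else if f ω = ⊤ ∨ g ω = ⊤ then ⊤
      else (((f ω).toReal + (g ω).toReal : ℝ) : EReal) := by
    funext ω
    by_cases h1 : f ω = ⊥ ∨ g ω = ⊥
    · rcases h1 with h | h <;> simp [h]
    push_neg at h1
    by_cases h2 : f ω = ⊤ ∨ g ω = ⊤
    · simp only [h1, or_self, if_false, h2, if_true]
      rcases h2 with h | h
      · rw [h]; exact EReal.top_add_of_ne_bot h1.2
      · rw [h]; exact EReal.add_top_of_ne_bot h1.1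
    push_neg at h2
    simp only [h1, or_self, if_false, h2, if_true, EReal.coe_add,
      EReal.coe_toReal h2.1 h1.1, EReal.coe_toReal h2.2 h1.2]
  rw [this]
  have hb : MeasurableSet {ω | f ω = ⊥ ∨ g ω = ⊥} :=
    ((hf (measurableSet_singleton ⊥)).union (hg (measurableSet_singleton ⊥)))
  have ht : MeasurableSet {ω | f ω = ⊤ ∨ g ω = ⊤} :=
    ((hf (measurableSet_singleton ⊤)).union (hg (measurableSet_singleton ⊤)))
  exact Measurable.ite hb measurable_const
    (Measurable.ite ht measurable_const
      ((hf.ereal_toReal.add hg.ereal_toReal).coe_real_ereal))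

lemma ereal_eq_top_of_forall_real {x : EReal} (h : ∀ r : ℝ, (r : EReal) ≤ x) : x = ⊤ := by
  induction x using EReal.rec with
  | bot => exact absurd (h 0) (by simp)
  | coe r => exact absurd (h (r + 1)) (by exact_mod_cast by linarith)
  | top => rfl

lemma ereal_iSup_add {a : ℕ → EReal} {b : EReal} (hmono : Monotone a)
    (hb : b ≠ ⊥) (ha : (⨆ n, a n) ≠ ⊥) :
    (⨆ n, (a n + b)) = (⨆ n, a n) + b := by
  have h1 : Tendsto a atTop (𝓝 (⨆ n, a n)) := tendsto_atTop_iSup hmono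
  have hcont : ContinuousAt (fun p : EReal × EReal => p.1 + p.2) ((⨆ n, a n), b) :=
    EReal.continuousAt_add (Or.inr hb) (Or.inl ha)
  have h2 : Tendsto (fun n => a n + b) atTop (𝓝 ((⨆ n, a n) + b)) :=
    (hcont.tendsto).comp (h1.prodMk_nhds tendsto_const_nhds)
  have h3 : Tendsto (fun n => a n + b) atTop (𝓝 (⨆ n, (a n + b))) :=
    tendsto_atTop_iSup (fun i j hij => add_le_add (hmono hij) le_rfl)
  exact tendsto_nhds_unique h3 h2

lemma lbb_add {F m : MeasurableSpace Ω} (hm : m ≤ F) {X ξ : Ω → EReal}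
    (hX : X ∈ Lbb F) (hξ : ξ ∈ Lbb m) : (fun ω => X ω + ξ ω) ∈ Lbb F := by
  obtain ⟨hXm, c1, hc1⟩ := hX
  obtain ⟨hξm, c2, hc2⟩ := hξ
  refine ⟨@ereal_measurable_add Ω F _ _ hXm (hξm.mono hm le_rfl), c1 + c2, fun ω => ?_⟩
  rw [EReal.coe_add]
  exact add_le_add (hc1 ω) (hc2 ω)

lemma const_lbb {m : MeasurableSpace Ω} (c : ℝ) : (fun _ => (c : EReal)) ∈ Lbb m :=
  ⟨measurable_const, c, fun _ => le_rfl⟩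

lemma top_lbb {m : MeasurableSpace Ω} : (fun _ : Ω => (⊤ : EReal)) ∈ Lbb m :=
  ⟨measurable_const, 0, fun _ => le_top⟩

lemma key_on_level {F m : MeasurableSpace Ω} (hm : m ≤ F) {P : @Measure Ω F}
    {β : (Ω → EReal) → Ω → EReal} {zd zu : EReal}
    (hCPM : IsCPM F m P β zd zu) {z : ℝ} (hz₂ : (z : EReal) < zu)
    {V ξ0 ρV : Ω → EReal} (hV : V ∈ Lbb F) (hξ0 : ξ0 ∈ Lbb m)
    (hρV : IsEssInfFam m P (Mset F m P β z V) ρV) :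
    ∀ᵐ ω ∂P, (z : EReal) ≤ β (fun ω' => V ω' + ξ0 ω') ω → ρV ω ≤ ξ0 ω := by
  classical
  obtain ⟨cV, hcV⟩ := hV.2
  obtain ⟨c0, hc0⟩ := hξ0.2
  set Y : ℕ → Ω → EReal := fun j ω => V ω + (ξ0 ω + ((j : ℝ) : EReal)) with hY
  have hYlbb : ∀ j, Y j ∈ Lbb F := fun j =>
    lbb_add hm hV (lbb_add le_rfl hξ0 (const_lbb (j : ℝ)))
  set S : Ω → Set ℕ := fun ω => {j | (z : EReal) ≤ β (Y j) ω} with hS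
  set N : Ω → ℕ := fun ω => sInf (S ω) with hN
  set ξ' : Ω → EReal := fun ω => ξ0 ω + ((N ω : ℝ) : EReal) with hξ'
  set C : ℕ → Set Ω := fun j => N ⁻¹' {j} ∩ {ω | (z : EReal) ≤ β (Y j) ω} with hC
  have hBm : ∀ j, MeasurableSet[m] {ω | (z : EReal) ≤ β (Y j) ω} := fun j =>
    (hCPM.maps (Y j) (hYlbb j)).1 measurableSet_Ici
  have hNle : ∀ i : ℕ, MeasurableSet[m] {ω | N ω ≤ i} := by
    intro i
    have heq : {ω | N ω ≤ i} =
        (⋃ j, ⋃ _ : j ≤ i, {ω | (z : EReal) ≤ β (Y j) ω}) ∪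
          (⋂ j, {ω | (z : EReal) ≤ β (Y j) ω}ᶜ) := by
      ext ω
      simp only [mem_setOf_eq, mem_union, mem_iUnion, mem_iInter, mem_compl_iff]
      constructor
      · intro h
        by_cases hne : (S ω).Nonempty
        · exact Or.inl ⟨N ω, h, Nat.sInf_mem hne⟩
        · exact Or.inr fun j hj => hne ⟨j, hj⟩
      · rintro (⟨j, hj, hzj⟩ | hall)
        · exact le_trans (Nat.sInf_le hzj) hj
        · have hemp : S ω = ∅ := eq_empty_iff_forall_notMem.2 hall
          show sInf (S ω) ≤ i
          rw [hemp, Nat.sInf_empty]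
          exact Nat.zero_le i
    rw [heq]
    exact ((MeasurableSet.iUnion fun j => MeasurableSet.iUnion fun _ => hBm j).union
      (MeasurableSet.iInter fun j => (hBm j).compl))
  have hNmeas : Measurable[m] N := by
    apply measurable_to_countable'
    intro i
    match i with
    | 0 =>
      have h0 : N ⁻¹' {0} = {ω | N ω ≤ 0} := by
        ext ω; simp [Nat.le_zero]
      rw [h0]; exact hNle 0
    | (i + 1) =>
      have h1 : N ⁻¹' {i + 1} = {ω | N ω ≤ i + 1} \ {ω | N ω ≤ i} := by
        ext ω
        simp only [mem_preimage, mem_singleton_iff, mem_diff, mem_setOf_eq]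
        omega
      rw [h1]; exact (hNle (i + 1)).diff (hNle i)
  have hξ'lbb : ξ' ∈ Lbb m := by
    refine ⟨@ereal_measurable_add Ω m _ _ hξ0.1
      ((measurable_from_top.comp hNmeas).coe_real_ereal), c0, fun ω => ?_⟩
    have hnn : (0 : EReal) ≤ ((N ω : ℝ) : EReal) := EReal.coe_nonneg.2 (Nat.cast_nonneg _)
    calc (c0 : EReal) ≤ ξ0 ω := hc0 ω
      _ = ξ0 ω + 0 := (add_zero _).symm
      _ ≤ ξ0 ω + ((N ω : ℝ) : EReal) := add_le_add le_rfl hnn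
  set G : Ω → EReal := fun ω => V ω + ξ' ω with hG
  have hGlbb : G ∈ Lbb F := lbb_add hm hV hξ'lbb
  have hCjm : ∀ j, MeasurableSet[m] (C j) := fun j =>
    (hNmeas (measurableSet_singleton j)).inter (hBm j)
  have hloc : ∀ j, ∀ᵐ ω ∂P, ω ∈ C j → β G ω = β (Y j) ω := by
    intro j
    have h1 := hCPM.loc G hGlbb (C j) (hCjm j)
    have h2 := hCPM.loc (Y j) (hYlbb j) (C j) (hCjm j)
    have hind : (C j).indicator G = (C j).indicator (Y j) := by
      funext ω
      by_cases hω : ω ∈ C j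
      · rw [indicator_of_mem hω, indicator_of_mem hω]
        have hNj : N ω = j := hω.1
        show V ω + (ξ0 ω + ((N ω : ℝ) : EReal)) = V ω + (ξ0 ω + ((j : ℝ) : EReal))
        rw [hNj]
      · rw [indicator_of_notMem hω, indicator_of_notMem hω]
    filter_upwards [h1, h2] with ω hω1 hω2 hCmem
    rw [hω1 hCmem, hind, ← hω2 hCmem]
  have hzutop : ∀ᵐ ω ∂P, zu ≤ β (fun _ => (⊤ : EReal)) ω :=
    hCPM.zu_least _ (hCPM.maps _ top_lbb).1 (fun X' hX' => hCPM.mono _ X' fun ω => le_top)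
  have hYmono : ∀ ω, Monotone fun j => Y j ω := by
    intro ω i j hij
    exact add_le_add le_rfl (add_le_add le_rfl (EReal.coe_le_coe_iff.2 (Nat.cast_le.2 hij)))
  have hYsup : ∀ ω, (fun _ : Ω => (⊤ : EReal)) ω = ⨆ j, Y j ω := by
    intro ω
    refine (ereal_eq_top_of_forall_real fun r => ?_).symm
    obtain ⟨j, hj⟩ : ∃ j : ℕ, r ≤ cV + (c0 + (j : ℝ)) :=
      ⟨⌈r - cV - c0⌉₊, by have := Nat.le_ceil (r - cV - c0); linarith⟩
    calc (r : EReal) ≤ ((cV + (c0 + (j : ℝ)) : ℝ) : EReal) := EReal.coe_le_coe_iff.2 hj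
      _ = (cV : EReal) + ((c0 : EReal) + ((j : ℝ) : EReal)) := by
          rw [EReal.coe_add, EReal.coe_add]
      _ ≤ Y j ω := add_le_add (hcV ω) (add_le_add (hc0 ω) le_rfl)
      _ ≤ ⨆ j, Y j ω := le_iSup (fun j => Y j ω) j
  have hcb := hCPM.contBelow Y (fun _ => ⊤) hYlbb top_lbb hYmono hYsup
  have hcov : ∀ᵐ ω ∂P, ∃ j, (z : EReal) ≤ β (Y j) ω := by
    filter_upwards [hcb, hzutop] with ω h1 h2
    have hlt : (z : EReal) < ⨆ j, β (Y j) ω := lt_of_lt_of_le hz₂ (h2.trans_eq h1)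
    obtain ⟨j, hj⟩ := lt_iSup_iff.1 hlt
    exact ⟨j, hj.le⟩
  have hmem : ∀ᵐ ω ∂P, (z : EReal) ≤ β (fun ω' => V ω' + ξ' ω') ω := by
    filter_upwards [hcov, ae_all_iff.2 hloc] with ω hex hlocω
    obtain ⟨j0, hj0⟩ := hex
    have hSne : (S ω).Nonempty := ⟨j0, hj0⟩
    have hNS : (z : EReal) ≤ β (Y (N ω)) ω := Nat.sInf_mem hSne
    have hCmem : ω ∈ C (N ω) := ⟨rfl, hNS⟩
    calc (z : EReal) ≤ β (Y (N ω)) ω := hNS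
      _ = β G ω := (hlocω (N ω) hCmem).symm
  have hξ'M : ξ' ∈ Mset F m P β z V := ⟨hξ'lbb, hmem⟩
  have hlower := hρV.2.1 ξ' hξ'M
  filter_upwards [hlower] with ω hωle hzB
  have h0S : 0 ∈ S ω := by
    show (z : EReal) ≤ β (Y 0) ω
    have hY0 : Y 0 = fun ω' => V ω' + ξ0 ω' := by
      funext ω'
      show V ω' + (ξ0 ω' + (((0 : ℕ) : ℝ) : EReal)) = V ω' + ξ0 ω'
      norm_num
    rw [hY0]; exact hzB
  have hN0 : N ω = 0 := Nat.le_zero.1 (Nat.sInf_le h0S)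
  have hξ'eq : ξ' ω = ξ0 ω := by
    show ξ0 ω + ((N ω : ℝ) : EReal) = ξ0 ω
    rw [hN0]; norm_num
  exact le_trans hωle hξ'eq.le

/-- the induced risk measure `ρ^z_t` is continuous from below:
`X_n ↑ X` implies `ρ^z_t(X_n) ↓ ρ^z_t(X)`. -/
theorem stmt_10 {Ω : Type*} (F m : MeasurableSpace Ω) (hm : m ≤ F) (P : @Measure Ω F)
    (β : (Ω → EReal) → Ω → EReal) (zd zu : EReal)
    (hCPM : IsCPM F m P β zd zu)
    (z : ℝ) (hz₁ : zd < (z : EReal)) (hz₂ : (z : EReal) < zu)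
    (Xs : ℕ → Ω → EReal) (X : Ω → EReal)
    (hXs : ∀ n, Xs n ∈ Lbb F) (hX : X ∈ Lbb F)
    (hmono : ∀ ω, Monotone fun n => Xs n ω)
    (hsup : ∀ ω, X ω = ⨆ n, Xs n ω)
    (ρn : ℕ → Ω → EReal) (ρ : Ω → EReal)
    (hn : ∀ n, IsEssInfFam m P (Mset F m P β z (Xs n)) (ρn n))
    (hρ : IsEssInfFam m P (Mset F m P β z X) ρ) :
    (∀ᵐ ω ∂P, Antitone fun n => ρn n ω) ∧ (∀ᵐ ω ∂P, ρ ω = ⨅ n, ρn n ω) := by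
  classical
  have hle : ∀ ω n, Xs n ω ≤ X ω := fun ω n => by
    rw [hsup ω]; exact le_iSup (fun n => Xs n ω) n
  have hsub : ∀ {n k : ℕ}, n ≤ k → Mset F m P β z (Xs n) ⊆ Mset F m P β z (Xs k) := by
    intro n k hnk ξ hξ
    obtain ⟨hξl, hξβ⟩ := hξ
    refine ⟨hξl, ?_⟩
    have hmle := hCPM.mono (fun ω => Xs k ω + ξ ω) (fun ω => Xs n ω + ξ ω)
      (fun ω => add_le_add (hmono ω hnk) le_rfl)
    filter_upwards [hξβ, hmle] with ω h1 h2
    exact h1.trans h2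
  have hsubX : ∀ n, Mset F m P β z (Xs n) ⊆ Mset F m P β z X := by
    intro n ξ hξ
    obtain ⟨hξl, hξβ⟩ := hξ
    refine ⟨hξl, ?_⟩
    have hmle := hCPM.mono (fun ω => X ω + ξ ω) (fun ω => Xs n ω + ξ ω)
      (fun ω => add_le_add (hle ω n) le_rfl)
    filter_upwards [hξβ, hmle] with ω h1 h2
    exact h1.trans h2
  have h_anti : ∀ᵐ ω ∂P, ∀ n, ρn (n + 1) ω ≤ ρn n ω := by
    rw [ae_all_iff]
    intro n
    exact (hn n).2.2 (ρn (n + 1)) (hn (n + 1)).1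
      (fun ξ hξ => (hn (n + 1)).2.1 ξ (hsub (Nat.le_succ n) hξ))
  constructor
  · filter_upwards [h_anti] with ω h
    exact antitone_nat_of_succ_le h
  · have hρ_le : ∀ᵐ ω ∂P, ∀ n, ρ ω ≤ ρn n ω :=
      ae_all_iff.2 fun n => (hn n).2.2 ρ hρ.1 (fun ξ hξ => hρ.2.1 ξ (hsubX n hξ))
    have hηmeas : Measurable[m] (fun ω => ⨅ n, ρn n ω) :=
      Measurable.iInf (fun n => (hn n).1)
    have hkey : ∀ ξ ∈ Mset F m P β z X, ∀ᵐ ω ∂P, (⨅ n, ρn n ω) ≤ ξ ω := by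
      intro ξ hξ
      obtain ⟨hξl, hξβ⟩ := hξ
      obtain ⟨c2, hc2⟩ := hξl.2
      have hstep : ∀ k : ℕ, ∀ᵐ ω ∂P, (⨅ n, ρn n ω) ≤ ξ ω + ((1 / (k + 1) : ℝ) : EReal) := by
        intro k
        set ε : ℝ := 1 / (k + 1) with hεd
        have hεpos : 0 < ε := by positivity
        set ξε : Ω → EReal := fun ω => ξ ω + (ε : EReal) with hξεd
        have hξεlbb : ξε ∈ Lbb m := lbb_add le_rfl hξl (const_lbb ε)
        have hW : (fun ω => X ω + ξ ω) ∈ Lbb F := lbb_add hm hX hξl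
        have hstrict : ∀ᵐ ω ∂P, β (fun ω' => X ω' + ξ ω') ω < zu →
            zd < β (fun ω' => (X ω' + ξ ω') + (ε : EReal)) ω →
            β (fun ω' => X ω' + ξ ω') ω < β (fun ω' => (X ω' + ξ ω') + (ε : EReal)) ω :=
          hCPM.strictShift (fun ω => X ω + ξ ω) hW ε hεpos
        have hmle : ∀ᵐ ω ∂P, β (fun ω' => X ω' + ξ ω') ω ≤
            β (fun ω' => (X ω' + ξ ω') + (ε : EReal)) ω :=
          hCPM.mono (fun ω' => (X ω' + ξ ω') + (ε : EReal)) (fun ω => X ω + ξ ω)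
            (fun ω => by
              show X ω + ξ ω ≤ (X ω + ξ ω) + (ε : EReal)
              nth_rewrite 1 [← add_zero (X ω + ξ ω)]
              exact add_le_add le_rfl (EReal.coe_nonneg.2 hεpos.le))
        have hassoc : (fun ω' => (X ω' + ξ ω') + (ε : EReal)) = fun ω' => X ω' + ξε ω' :=
          funext fun ω' => add_assoc _ _ _
        have hzlt : ∀ᵐ ω ∂P, (z : EReal) < β (fun ω' => X ω' + ξε ω') ω := by
          rw [hassoc] at hstrict hmle
          filter_upwards [hstrict, hmle, hξβ] with ω hs h2 h3
          by_cases hlt : β (fun ω' => X ω' + ξ ω') ω < zu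
          · exact lt_of_le_of_lt h3 (hs hlt (lt_of_lt_of_le (lt_of_lt_of_le hz₁ h3) h2))
          · push_neg at hlt
            exact lt_of_lt_of_le hz₂ (le_trans hlt h2)
        have hXεlbb : (fun ω => X ω + ξε ω) ∈ Lbb F := lbb_add hm hX hξεlbb
        have hXsε : ∀ n, (fun ω => Xs n ω + ξε ω) ∈ Lbb F := fun n => lbb_add hm (hXs n) hξεlbb
        have hmono' : ∀ ω, Monotone fun n => Xs n ω + ξε ω :=
          fun ω i j hij => add_le_add (hmono ω hij) le_rfl
        have hsup' : ∀ ω, X ω + ξε ω = ⨆ n, (Xs n ω + ξε ω) := by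
          intro ω
          have hb : ξε ω ≠ ⊥ := by
            intro hbot
            have hge : ((c2 + ε : ℝ) : EReal) ≤ ξε ω := by
              rw [EReal.coe_add]; exact add_le_add (hc2 ω) le_rfl
            rw [hbot] at hge
            exact (not_le.2 (EReal.bot_lt_coe _)) hge
          have ha : (⨆ n, Xs n ω) ≠ ⊥ := by
            intro hbot
            obtain ⟨cX, hcX⟩ := hX.2
            have hX' := hcX ω
            rw [hsup ω, hbot] at hX'
            exact (not_le.2 (EReal.bot_lt_coe _)) hX'
          rw [hsup ω, ereal_iSup_add (hmono ω) hb ha]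
        have hcb : ∀ᵐ ω ∂P, β (fun ω => X ω + ξε ω) ω =
            ⨆ n, β (fun ω' => Xs n ω' + ξε ω') ω :=
          hCPM.contBelow (fun n ω => Xs n ω + ξε ω) (fun ω => X ω + ξε ω)
            hXsε hXεlbb hmono' hsup'
        have hex : ∀ᵐ ω ∂P, ∃ n, (z : EReal) ≤ β (fun ω' => Xs n ω' + ξε ω') ω := by
          filter_upwards [hcb, hzlt] with ω h1 h2
          have hlt : (z : EReal) < ⨆ n, β (fun ω' => Xs n ω' + ξε ω') ω := by
            rw [← h1]; exact h2
          obtain ⟨n, hn'⟩ := lt_iSup_iff.1 hlt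
          exact ⟨n, hn'.le⟩
        have hkon : ∀ n, ∀ᵐ ω ∂P,
            (z : EReal) ≤ β (fun ω' => Xs n ω' + ξε ω') ω → ρn n ω ≤ ξε ω :=
          fun n => key_on_level hm hCPM hz₂ (hXs n) hξεlbb (hn n)
        filter_upwards [hex, ae_all_iff.2 hkon] with ω h1 h2
        obtain ⟨n, hn'⟩ := h1
        exact le_trans (iInf_le (fun n => ρn n ω) n) (h2 n hn')
      filter_upwards [ae_all_iff.2 hstep] with ω h
      rcases eq_or_ne (ξ ω) ⊤ with htop | hne
      · rw [htop]; exact le_top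
      · have hbot : ξ ω ≠ ⊥ := by
          intro hb
          have hc := hc2 ω
          rw [hb] at hc
          exact (not_le.2 (EReal.bot_lt_coe _)) hc
        have hx : ((ξ ω).toReal : EReal) = ξ ω := EReal.coe_toReal hne hbot
        have hlim : Tendsto (fun k : ℕ => (((ξ ω).toReal + 1 / (k + 1) : ℝ) : EReal)) atTop
            (𝓝 (((ξ ω).toReal : ℝ) : EReal)) := by
          have hr : Tendsto (fun k : ℕ => (ξ ω).toReal + 1 / ((k : ℝ) + 1)) atTop
              (𝓝 ((ξ ω).toReal)) := by
            have h0 : Tendsto (fun n : ℕ => 1 / ((n : ℝ) + 1)) atTop (𝓝 0) :=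
              tendsto_one_div_add_atTop_nhds_zero_nat
            simpa using tendsto_const_nhds.add h0
          exact (continuous_coe_real_ereal.tendsto _).comp hr
        rw [← hx]
        refine ge_of_tendsto' hlim fun k => ?_
        have hk := h k
        rw [← hx, ← EReal.coe_add] at hk
        exact hk
    have h2 := hρ.2.2 (fun ω => ⨅ n, ρn n ω) hηmeas hkey
    filter_upwards [hρ_le, h2] with ω h1 h3
    exact le_antisymm (le_iInf h1) h3
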